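/- There exists a constant γ ∈ (0,1] such that for every integer n ≥ 2 and every s ∈ [0,1]: γ(e^{−ns} − 1 + ns) ≤ ns − 1 + (1−s)^n ≤ e^{−ns} − 1 + ns. -/

import Mathlib

/-- There exists a constant `γ ∈ (0,1]` such that for every integer `n ≥ 2` and every
`s ∈ [0,1]`: `γ(e^{−ns} − 1 + ns) ≤ ns − 1 + (1−s)^n ≤ e^{−ns} − 1 + ns`. -/
theorem binomial_exp_comparison :
    ∃ γ : ℝ, 0 < γ ∧ γ ≤ 1 ∧
      ∀ n : ℕ, 2 ≤ n → ∀ s : ℝ, s ∈ Set.Icc (0 : ℝ) 1 →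
        γ * (Real.exp (-(n * s)) - 1 + n * s) ≤ n * s - 1 + (1 - s) ^ n ∧
        n * s - 1 + (1 - s) ^ n ≤ Real.exp (-(n * s)) - 1 + n * s := by
  refine ⟨1/2, by norm_num, by norm_num, ?_⟩
  intro n hn s hs
  obtain ⟨hs0, hs1⟩ := hs
  have hn2 : (2:ℝ) ≤ n := by exact_mod_cast hn
  have hub : (1 - s) ^ n ≤ Real.exp (-(n * s)) := by
    have h1 : (1 - s) ≤ Real.exp (-s) := by
      have := Real.add_one_le_exp (-s); linarith
    calc (1 - s) ^ n ≤ (Real.exp (-s)) ^ n :=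
          pow_le_pow_left₀ (by linarith) h1 n
      _ = Real.exp (-(n * s)) := by
          rw [← Real.exp_nat_mul]; ring_nf
  constructor
  · -- lower bound
    set h : ℝ → ℝ := fun t => n * t / 2 - 1 / 2 + (1 - t) ^ n - Real.exp (-(n * t)) / 2
      with hh
    have hderiv : ∀ t : ℝ, HasDerivAt h
        (n / 2 - n * (1 - t) ^ (n - 1) + n * Real.exp (-(n * t)) / 2) t := by
      intro t
      have h1 : HasDerivAt (fun t : ℝ => (1 - t) ^ n) (-(n * (1 - t) ^ (n - 1))) t := by
        have hb : HasDerivAt (fun t : ℝ => 1 - t) (-1) t := by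
          simpa [Pi.sub_def] using (hasDerivAt_const t (1:ℝ)).sub (hasDerivAt_id t)
        have : HasDerivAt (fun t : ℝ => (1 - t) ^ n) _ t := hb.pow n
        convert this using 1
        ring
      have h2 : HasDerivAt (fun t : ℝ => Real.exp (-(n * t))) (-n * Real.exp (-(n * t))) t := by
        have hb : HasDerivAt (fun t : ℝ => -(n * t)) (-n) t := by
          simpa [Pi.neg_def] using ((hasDerivAt_id t).const_mul (n:ℝ)).neg
        simpa [mul_comm] using hb.exp
      have h0 : HasDerivAt (fun t : ℝ => n * t / 2 - 1 / 2) (n / 2) t := by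
        have := ((hasDerivAt_id t).const_mul (n:ℝ)).div_const 2
        simpa using this.sub_const (1/2)
      have : HasDerivAt h _ t := (h0.add h1).sub (h2.div_const 2)
      convert this using 1
      ring
    have hdiff : Differentiable ℝ h := fun t => (hderiv t).differentiableAt
    have hmono : MonotoneOn h (Set.Icc (0:ℝ) 1) := by
      apply monotoneOn_of_deriv_nonneg (convex_Icc 0 1) hdiff.continuous.continuousOn
        (hdiff.differentiableOn)
      intro t ht
      rw [(hderiv t).deriv]
      rw [interior_Icc] at ht
      obtain ⟨ht0, ht1⟩ := ht
      have key : (1 - t) ^ (n - 1) ≤ 1 / 2 + Real.exp (-(n * t)) / 2 := by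
        have e1 : (1 - t) ^ (n - 1) ≤ (Real.exp (-t)) ^ (n - 1) := by
          apply pow_le_pow_left₀ (by linarith)
          have := Real.add_one_le_exp (-t); linarith
        have e2 : (Real.exp (-t)) ^ (n - 1) = Real.exp (-((n - 1 : ℕ) * t)) := by
          rw [← Real.exp_nat_mul]; ring_nf
        have hcast : ((n - 1 : ℕ) : ℝ) = (n : ℝ) - 1 := by
          have : 1 ≤ n := by omega
          push_cast [this]; ring
        have e3 : Real.exp (-((n - 1 : ℕ) * t)) ≤ Real.exp (-(n * t) / 2) := by
          apply Real.exp_le_exp.2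
          rw [hcast]
          nlinarith
        have e4 : Real.exp (-(n * t) / 2) ≤ 1 / 2 + Real.exp (-(n * t)) / 2 := by
          have hsq : Real.exp (-(n * t) / 2) ^ 2 = Real.exp (-(n * t)) := by
            rw [← Real.exp_nat_mul]; ring_nf
          nlinarith [sq_nonneg (Real.exp (-(n * t) / 2) - 1)]
        calc (1 - t) ^ (n - 1) ≤ (Real.exp (-t)) ^ (n - 1) := e1
          _ = Real.exp (-((n - 1 : ℕ) * t)) := e2
          _ ≤ Real.exp (-(n * t) / 2) := e3
          _ ≤ 1 / 2 + Real.exp (-(n * t)) / 2 := e4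
      nlinarith
    have h0mem : (0:ℝ) ∈ Set.Icc (0:ℝ) 1 := by norm_num
    have hsmem : s ∈ Set.Icc (0:ℝ) 1 := ⟨hs0, hs1⟩
    have := hmono h0mem hsmem hs0
    have h0val : h 0 = 0 := by simp [hh]; norm_num
    rw [h0val] at this
    have hhs : h s = n * s / 2 - 1 / 2 + (1 - s) ^ n - Real.exp (-(n * s)) / 2 := rfl
    rw [hhs] at this
    linarith
  · linarith
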